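/- With the notation of the recursive choice above, for each 2 ≤ i ≤ m, the (m+1)-tuple (2, k_1, k_{i+1}, ..., k_m, k'_2, ..., k'_i) — where k'_i > 2C + k_{i+1} + ... + k_m + k'_2 + ... + k'_{i-1} and (k_1, ..., k_m) is C-very spread — is spread when its entries are listed in increasing order. -/

import Mathlib

/-- A list of naturals is spread: strictly increasing, and each entry after
the first exceeds the sum of all earlier entries. -/
def SpreadList (l : List ℕ) : Prop :=
  List.Pairwise (· < ·) l ∧
    ∀ (n : ℕ) (h : n < l.length), 0 < n → (l.take n).sum < l.get ⟨n, h⟩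

/-- Auxiliary: every entry exceeds `s` plus the sum of all earlier entries. -/
def SpreadFrom (s : ℕ) : List ℕ → Prop
  | [] => True
  | x :: l => s < x ∧ SpreadFrom (s + x) l

lemma spreadFrom_append : ∀ {A : List ℕ} {s : ℕ} {B : List ℕ},
    SpreadFrom s A → SpreadFrom (s + A.sum) B → SpreadFrom s (A ++ B)
  | [], s, B, _, hB => by simpa using hB
  | x :: l, s, B, ⟨h1, h2⟩, hB =>
    ⟨h1, spreadFrom_append h2 (by simpa [add_assoc] using hB)⟩

lemma spreadFrom_sorted : ∀ {l : List ℕ} {s : ℕ}, SpreadFrom s l →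
    List.Pairwise (· < ·) l ∧ ∀ y ∈ l, s < y
  | [], s, _ => ⟨List.Pairwise.nil, by simp⟩
  | x :: l, s, ⟨hx, hl⟩ => by
    obtain ⟨hs, hmem⟩ := spreadFrom_sorted hl
    refine ⟨List.pairwise_cons.2 ⟨fun b hb => ?_, hs⟩, ?_⟩
    · exact lt_of_le_of_lt (Nat.le_add_left x s) (hmem b hb)
    · intro y hy
      rcases List.mem_cons.1 hy with rfl | hy
      · exact hx
      · exact lt_of_le_of_lt (Nat.le_add_right s x) (hmem y hy)

lemma spreadFrom_get : ∀ {l : List ℕ} {s n : ℕ} (h : n < l.length),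
    SpreadFrom s l → (l.take n).sum + s < l.get ⟨n, h⟩
  | x :: l, s, 0, h, ⟨hx, _⟩ => by simpa using hx
  | x :: l, s, n + 1, h, ⟨hx, hl⟩ => by
    have := spreadFrom_get (l := l) (s := s + x) (n := n)
      (by simpa using Nat.lt_of_succ_lt_succ h) hl
    simpa [List.take_succ_cons, add_comm, add_left_comm, add_assoc] using this

lemma spreadList_of_spreadFrom {l : List ℕ} (h : SpreadFrom 0 l) : SpreadList l := by
  refine ⟨(spreadFrom_sorted h).1, fun n hn _ => ?_⟩
  simpa using spreadFrom_get hn h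

lemma sum_map_range' (f : ℕ → ℕ) : ∀ (t a : ℕ),
    ((List.range' a t).map f).sum = ∑ l ∈ Finset.Ico a (a + t), f l
  | 0, a => by simp
  | t + 1, a => by
    rw [List.range'_succ, List.map_cons, List.sum_cons, sum_map_range' f t (a + 1)]
    rw [show a + (t + 1) = a + 1 + t by omega]
    rw [Finset.sum_eq_sum_Ico_succ_bot (by omega : a < a + 1 + t) f]

lemma spreadFrom_range' (f : ℕ → ℕ) : ∀ (b a s : ℕ),
    (∀ t, t < b → s + ((List.range' a t).map f).sum < f (a + t)) →
    SpreadFrom s ((List.range' a b).map f)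
  | 0, a, s, _ => trivial
  | b + 1, a, s, h => by
    rw [List.range'_succ, List.map_cons]
    refine ⟨by simpa using h 0 (Nat.succ_pos b), ?_⟩
    refine spreadFrom_range' f b (a + 1) (s + f a) (fun t ht => ?_)
    have := h (t + 1) (by omega)
    rw [List.range'_succ, List.map_cons, List.sum_cons] at this
    have e : a + (t + 1) = a + 1 + t := by omega
    rw [e] at this
    omega

/-- With (k₁, ..., k_m) C-very spread (k₁ > 2, the case treated in Section 7)
and the recursive choice k'_j > 2C + k_{j+1} + ... + k_m + k'₂ + ... + k'_{j-1}
for 2 ≤ j ≤ i, the (m+1)-tuple (2, k₁, k_{i+1}, ..., k_m, k'₂, ..., k'_i),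
listed in increasing order, is spread. -/
theorem extraRegularity_tuple_spread (m C i : ℕ) (hC : 2 < C) (k k' : ℕ → ℕ)
    (hk1 : 2 < k 1) (hk1C : k 1 ≤ C)
    (hvs : ∀ j, 2 ≤ j → j ≤ m → 2 * C + ∑ l ∈ Finset.Ico 2 j, k l < k j)
    (hi : 2 ≤ i) (him : i ≤ m)
    (hrec : ∀ j, 2 ≤ j → j ≤ i →
      2 * C + (∑ l ∈ Finset.Icc (j + 1) m, k l) + ∑ l ∈ Finset.Ico 2 j, k' l < k' j) :
    SpreadList (2 :: k 1 ::
      ((List.range' (i + 1) (m - i)).map k ++ (List.range' 2 (i - 1)).map k')) := by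
  apply spreadList_of_spreadFrom
  refine ⟨by norm_num, by simpa using hk1, ?_⟩
  have hs0 : 0 + 2 + k 1 < 2 * C := by omega
  apply spreadFrom_append
  · -- the k-part
    refine spreadFrom_range' k (m - i) (i + 1) _ (fun t ht => ?_)
    have hj := hvs (i + 1 + t) (by omega) (by omega)
    rw [sum_map_range' k t (i + 1)]
    have hsub : ∑ l ∈ Finset.Ico (i + 1) (i + 1 + t), k l
        ≤ ∑ l ∈ Finset.Ico 2 (i + 1 + t), k l := by
      apply Finset.sum_le_sum_of_subset
      apply Finset.Ico_subset_Ico (by omega) le_rfl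
    omega
  · -- the k'-part
    have hAsum : ((List.range' (i + 1) (m - i)).map k).sum
        = ∑ l ∈ Finset.Icc (i + 1) m, k l := by
      rw [sum_map_range' k (m - i) (i + 1), show i + 1 + (m - i) = m + 1 by omega,
        Finset.Ico_add_one_right_eq_Icc]
    refine spreadFrom_range' k' (i - 1) 2 _ (fun t ht => ?_)
    have hj := hrec (2 + t) (by omega) (by omega)
    rw [sum_map_range' k' t 2, hAsum]
    have hsub : ∑ l ∈ Finset.Icc (i + 1) m, k l
        ≤ ∑ l ∈ Finset.Icc (2 + t + 1) m, k l := by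
      apply Finset.sum_le_sum_of_subset
      apply Finset.Icc_subset_Icc (by omega) le_rfl
    omega
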